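/- Let X ⊆ ℝⁿ be a compact polyhedron and let ψ : X → ℝᵐ be a fully-connected feed-forward ReLU neural network, i.e., ψ(x) = W_ℓ z_{ℓ−1} + b_ℓ where z₀ = x and z_i = max(0, W_i z_{i−1} + b_i) componentwise for i = 1, …, ℓ−1, with weight matrices W_i and bias vectors b_i. Then ψ is MILP representable. -/

import Mathlib

/-- A function `ψ` defined on a domain `X ⊆ ℝⁿ` with values in `ℝᵐ` is MILP representable
if there are nonnegative integers `c`, `b` and a polyhedron `P = {w : M w ≤ d}` in
`ℝ^(n+m+c+b)` such that for all `x ∈ X` and `u`, `u = ψ x` iff there exist `z ∈ ℝᶜ` and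
binary `β ∈ {0,1}ᵇ` with `(x, u, z, β) ∈ P`. -/
def MILPRepresentable {n m : ℕ} (X : Set (Fin n → ℝ))
    (ψ : (Fin n → ℝ) → (Fin m → ℝ)) : Prop :=
  ∃ (c b k : ℕ) (M : Matrix (Fin k) (Fin (n + m + c + b)) ℝ) (d : Fin k → ℝ),
    ∀ x ∈ X, ∀ u : Fin m → ℝ,
      u = ψ x ↔ ∃ (z : Fin c → ℝ) (β : Fin b → ℝ),
        (∀ j, β j = 0 ∨ β j = 1) ∧
        M.mulVec (Fin.append (Fin.append (Fin.append x u) z) β) ≤ d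

/-- A subset of `ℝⁿ` is a polyhedron if it is the solution set of finitely many linear
inequalities. -/
def IsPolyhedron {n : ℕ} (X : Set (Fin n → ℝ)) : Prop :=
  ∃ (k : ℕ) (C : Matrix (Fin k) (Fin n) ℝ) (d : Fin k → ℝ),
    X = {x | C.mulVec x ≤ d}

/-- The hidden part of a fully-connected feed-forward ReLU neural network: `nnHidden W b k x`
is the output of the first `k` hidden layers (each an affine map followed by a
componentwise ReLU) applied to the input `x`. -/
def nnHidden {dims : ℕ → ℕ}
    (W : ∀ i : ℕ, Matrix (Fin (dims (i + 1))) (Fin (dims i)) ℝ)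
    (b : ∀ i : ℕ, Fin (dims (i + 1)) → ℝ) :
    ∀ k : ℕ, (Fin (dims 0) → ℝ) → (Fin (dims k) → ℝ)
  | 0 => fun x => x
  | (k + 1) => fun x j => max 0 ((W k).mulVec (nnHidden W b k x) j + b k j)


open Finset

def LinRep {n m : ℕ} (X : Set (Fin n → ℝ)) (ψ : (Fin n → ℝ) → (Fin m → ℝ)) : Prop :=
  ∃ (cι bι kι : Type) (_ : Fintype cι) (_ : Fintype bι) (_ : Fintype kι)
    (ax : kι → Fin n → ℝ) (au : kι → Fin m → ℝ) (az : kι → cι → ℝ)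
    (aβ : kι → bι → ℝ) (d : kι → ℝ),
    ∀ x ∈ X, ∀ u : Fin m → ℝ,
      u = ψ x ↔ ∃ (z : cι → ℝ) (β : bι → ℝ),
        (∀ j, β j = 0 ∨ β j = 1) ∧
        ∀ t, (∑ i, ax t i * x i) + (∑ i, au t i * u i)
            + (∑ i, az t i * z i) + (∑ i, aβ t i * β i) ≤ d t


lemma sum_append_mul {a b : ℕ} (f p : Fin a → ℝ) (g q : Fin b → ℝ) :
    ∑ i, Fin.append f g i * Fin.append p q i = (∑ i, f i * p i) + (∑ i, g i * q i) := by
  rw [Fin.sum_univ_add]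
  simp [Fin.append_left, Fin.append_right]

lemma LinRep.milp {n m : ℕ} {X : Set (Fin n → ℝ)} {ψ : (Fin n → ℝ) → (Fin m → ℝ)}
    (h : LinRep X ψ) : MILPRepresentable X ψ := by
  obtain ⟨cι, bι, kι, fc, fb, fk, ax, au, az, aβ, d, h⟩ := h
  refine ⟨Fintype.card cι, Fintype.card bι, Fintype.card kι, ?_, ?_, ?_⟩
  · exact fun t => Fin.append (Fin.append (Fin.append (ax ((Fintype.equivFin kι).symm t))
      (au ((Fintype.equivFin kι).symm t)))
      (fun i => az ((Fintype.equivFin kι).symm t) ((Fintype.equivFin cι).symm i)))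
      (fun i => aβ ((Fintype.equivFin kι).symm t) ((Fintype.equivFin bι).symm i))
  · exact fun t => d ((Fintype.equivFin kι).symm t)
  intro x hx u
  rw [h x hx u]
  set ec := Fintype.equivFin cι
  set eb := Fintype.equivFin bι
  set ek := Fintype.equivFin kι
  constructor
  · rintro ⟨z, β, hβ, hc⟩
    refine ⟨z ∘ ec.symm, β ∘ eb.symm, fun j => hβ _, ?_⟩
    intro t
    show Matrix.mulVec _ _ t ≤ _
    simp only [Matrix.mulVec, dotProduct]
    show ∑ s, _ * _ ≤ _
    rw [sum_append_mul, sum_append_mul, sum_append_mul]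
    have h1 : ∑ i, az (ek.symm t) (ec.symm i) * z (ec.symm i)
        = ∑ i, az (ek.symm t) i * z i :=
      Equiv.sum_comp ec.symm (fun i => az (ek.symm t) i * z i)
    have h2 : ∑ i, aβ (ek.symm t) (eb.symm i) * β (eb.symm i)
        = ∑ i, aβ (ek.symm t) i * β i :=
      Equiv.sum_comp eb.symm (fun i => aβ (ek.symm t) i * β i)
    simp only [Function.comp]
    rw [h1, h2]
    linarith [hc (ek.symm t)]
  · rintro ⟨z, β, hβ, hc⟩
    refine ⟨z ∘ ec, β ∘ eb, fun j => hβ _, ?_⟩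
    intro t
    have := hc (ek t)
    simp only [Matrix.mulVec, dotProduct] at this
    replace this : ∑ s, _ * _ ≤ _ := this
    rw [sum_append_mul, sum_append_mul, sum_append_mul] at this
    simp only [Equiv.symm_apply_apply] at this
    have h1 : ∑ i, az t (ec.symm i) * z i
        = ∑ j, az t j * (z ∘ ec) j :=
      Fintype.sum_equiv ec.symm _ _ (by intro i; simp)
    have h2 : ∑ i, aβ t (eb.symm i) * β i
        = ∑ j, aβ t j * (β ∘ eb) j :=
      Fintype.sum_equiv eb.symm _ _ (by intro i; simp)
    rw [h1, h2] at this
    linarith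

lemma linRep_id {n : ℕ} (X : Set (Fin n → ℝ)) : LinRep X (fun x => x) := by
  refine ⟨Empty, Empty, Fin n ⊕ Fin n, inferInstance, inferInstance, inferInstance,
    Sum.elim (fun j i => if i = j then -1 else 0) (fun j i => if i = j then 1 else 0),
    Sum.elim (fun j i => if i = j then 1 else 0) (fun j i => if i = j then -1 else 0),
    fun _ => (0 : Empty → ℝ), fun _ => (0 : Empty → ℝ), 0, ?_⟩
  intro x hx u
  constructor
  · rintro rfl
    refine ⟨fun e => e.elim, fun e => e.elim, fun j => j.elim, ?_⟩
    rintro (j | j) <;> simp [ite_mul, Finset.sum_ite_eq']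
  · rintro ⟨z, β, hβ, hc⟩
    funext j
    have h1 := hc (Sum.inl j)
    have h2 := hc (Sum.inr j)
    simp [ite_mul, Finset.sum_ite_eq'] at h1 h2
    linarith

lemma LinRep.affine {n p q : ℕ} {X : Set (Fin n → ℝ)} {ψ : (Fin n → ℝ) → (Fin p → ℝ)}
    (h : LinRep X ψ) (A : Matrix (Fin q) (Fin p) ℝ) (cc : Fin q → ℝ) :
    LinRep X (fun x => A.mulVec (ψ x) + cc) := by
  obtain ⟨cι, bι, kι, fc, fb, fk, ax, au, az, aβ, d, h⟩ := h
  refine ⟨cι ⊕ Fin p, bι, kι ⊕ (Fin q ⊕ Fin q), inferInstance, inferInstance, inferInstance,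
    Sum.elim ax (fun _ _ => 0),
    Sum.elim (fun _ _ => 0) (Sum.elim (fun j i => if i = j then 1 else 0)
      (fun j i => if i = j then -1 else 0)),
    Sum.elim (fun t => Sum.elim (az t) (au t))
      (Sum.elim (fun j => Sum.elim (fun _ => 0) (fun i => -(A j i)))
        (fun j => Sum.elim (fun _ => 0) (fun i => A j i))),
    Sum.elim aβ (fun _ _ => 0),
    Sum.elim d (Sum.elim cc (fun j => -cc j)), ?_⟩
  intro x hx u
  constructor
  · rintro rfl
    obtain ⟨z, β, hβ, hc⟩ := (h x hx (ψ x)).mp rfl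
    refine ⟨Sum.elim z (ψ x), β, hβ, ?_⟩
    rintro (t | (j | j))
    · have := hc t
      simp only [Sum.elim_inl, Fintype.sum_sum_type, Sum.elim_inr]
      simp only [zero_mul, Finset.sum_const_zero]
      linarith
    · simp only [Sum.elim_inl, Sum.elim_inr, Fintype.sum_sum_type]
      simp [ite_mul, Finset.sum_ite_eq', Matrix.mulVec, dotProduct]
    · simp only [Sum.elim_inl, Sum.elim_inr, Fintype.sum_sum_type]
      simp [ite_mul, Finset.sum_ite_eq', Matrix.mulVec, dotProduct]
  · rintro ⟨z, β, hβ, hc⟩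
    have hv : (fun i => z (Sum.inr i)) = ψ x := by
      refine (h x hx _).mpr ⟨fun i => z (Sum.inl i), β, hβ, ?_⟩
      intro t
      have := hc (Sum.inl t)
      simp only [Sum.elim_inl, Fintype.sum_sum_type, Sum.elim_inr,
        zero_mul, Finset.sum_const_zero] at this
      linarith
    funext j
    have h1 := hc (Sum.inr (Sum.inl j))
    have h2 := hc (Sum.inr (Sum.inr j))
    simp only [Sum.elim_inl, Sum.elim_inr, Fintype.sum_sum_type] at h1 h2
    simp only [ite_mul, Finset.sum_ite_eq', zero_mul, Finset.sum_const_zero,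
      Finset.mem_univ, if_true, one_mul, neg_mul] at h1 h2
    rw [Finset.sum_neg_distrib] at h1
    have huj : u j = ∑ i, A j i * z (Sum.inr i) + cc j := by linarith
    show u j = A.mulVec (ψ x) j + cc j
    rw [huj, ← hv]
    simp [Matrix.mulVec, dotProduct]

lemma LinRep.relu {n p q : ℕ} {X : Set (Fin n → ℝ)} {ψ : (Fin n → ℝ) → (Fin p → ℝ)}
    (h : LinRep X ψ) (A : Matrix (Fin q) (Fin p) ℝ) (cc : Fin q → ℝ) (M0 : ℝ)
    (hM : ∀ x ∈ X, ∀ j, |A.mulVec (ψ x) j + cc j| ≤ M0) :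
    LinRep X (fun x j => max 0 (A.mulVec (ψ x) j + cc j)) := by
  obtain ⟨cι, bι, kι, fc, fb, fk, ax, au, az, aβ, d, h⟩ := h
  refine ⟨cι ⊕ Fin p, bι ⊕ Fin q, kι ⊕ (Fin q ⊕ Fin q ⊕ Fin q ⊕ Fin q),
    inferInstance, inferInstance, inferInstance,
    -- coefficients of x
    Sum.elim ax (fun _ _ => 0),
    -- coefficients of u
    Sum.elim (fun _ _ => 0) (Sum.elim (fun j i => if i = j then -1 else 0)
      (Sum.elim (fun j i => if i = j then -1 else 0)
        (Sum.elim (fun j i => if i = j then 1 else 0) (fun j i => if i = j then 1 else 0)))),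
    -- coefficients of z = (old z, v)
    Sum.elim (fun t => Sum.elim (az t) (au t))
      (Sum.elim (fun _ => Sum.elim (fun _ => 0) (fun _ => 0))
        (Sum.elim (fun j => Sum.elim (fun _ => 0) (fun i => A j i))
          (Sum.elim (fun j => Sum.elim (fun _ => 0) (fun i => -(A j i)))
            (fun _ => Sum.elim (fun _ => 0) (fun _ => 0))))),
    -- coefficients of β = (old β, γ)
    Sum.elim (fun t => Sum.elim (aβ t) (fun _ => 0))
      (Sum.elim (fun _ => Sum.elim (fun _ => 0) (fun _ => 0))
        (Sum.elim (fun _ => Sum.elim (fun _ => 0) (fun _ => 0))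
          (Sum.elim (fun j => Sum.elim (fun _ => 0) (fun i => if i = j then M0 else 0))
            (fun j => Sum.elim (fun _ => 0) (fun i => if i = j then -M0 else 0))))),
    -- rhs
    Sum.elim d (Sum.elim (fun _ => 0) (Sum.elim (fun j => -cc j)
      (Sum.elim (fun j => cc j + M0) (fun _ => 0)))), ?_⟩
  intro x hx u
  set pre : Fin q → ℝ := fun j => A.mulVec (ψ x) j + cc j with hpre
  constructor
  · rintro rfl
    obtain ⟨z, β, hβ, hc⟩ := (h x hx (ψ x)).mp rfl
    refine ⟨Sum.elim z (ψ x), Sum.elim β (fun j => if 0 ≤ pre j then 1 else 0), ?_, ?_⟩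
    · rintro (j | j)
      · exact hβ j
      · dsimp; split <;> simp
    rintro (t | (j | j | j | j)) <;>
      simp only [Sum.elim_inl, Sum.elim_inr, Fintype.sum_sum_type, ite_mul,
        Finset.sum_ite_eq', Finset.mem_univ, if_true, zero_mul, one_mul, neg_mul,
        Finset.sum_const_zero, add_zero, zero_add, neg_zero]
    · have := hc t
      linarith
    · -- -u j ≤ 0
      simp [le_max_left]
    · -- pre j ≤ u j  i.e.  -u j + ∑ A j i ψx i ≤ -cc j
      have h1 : pre j ≤ max 0 (pre j) := le_max_right _ _
      have h2 : pre j = ∑ i, A j i * ψ x i + cc j := by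
        simp [hpre, Matrix.mulVec, dotProduct]
      linarith
    · -- u j ≤ pre j + M0 (1 - γ j)
      have h2 : pre j = ∑ i, A j i * ψ x i + cc j := by
        simp [hpre, Matrix.mulVec, dotProduct]
      rw [Finset.sum_neg_distrib]
      by_cases hj : 0 ≤ pre j
      · rw [if_pos hj, max_eq_right hj]
        linarith
      · rw [if_neg hj, max_eq_left (le_of_lt (not_le.mp hj))]
        have hMj := abs_le.mp (show |pre j| ≤ M0 from hM x hx j)
        linarith [hMj.1]
    · -- u j ≤ M0 γ j
      by_cases hj : 0 ≤ pre j
      · rw [if_pos hj, max_eq_right hj]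
        have hMj := abs_le.mp (show |pre j| ≤ M0 from hM x hx j)
        linarith [hMj.2]
      · rw [if_neg hj, max_eq_left (le_of_lt (not_le.mp hj))]
        simp
  · rintro ⟨z, β, hβ, hc⟩
    have hv : (fun i => z (Sum.inr i)) = ψ x := by
      refine (h x hx _).mpr ⟨fun i => z (Sum.inl i), fun j => β (Sum.inl j),
        fun j => hβ (Sum.inl j), ?_⟩
      intro t
      have := hc (Sum.inl t)
      simp only [Sum.elim_inl, Fintype.sum_sum_type, Sum.elim_inr,
        zero_mul, Finset.sum_const_zero, add_zero] at this
      linarith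
    funext j
    have h1 := hc (Sum.inr (Sum.inl j))
    have h2 := hc (Sum.inr (Sum.inr (Sum.inl j)))
    have h3 := hc (Sum.inr (Sum.inr (Sum.inr (Sum.inl j))))
    have h4 := hc (Sum.inr (Sum.inr (Sum.inr (Sum.inr j))))
    simp only [Sum.elim_inl, Sum.elim_inr, Fintype.sum_sum_type, ite_mul,
      Finset.sum_ite_eq', Finset.mem_univ, if_true, zero_mul, one_mul, neg_mul,
      Finset.sum_const_zero, add_zero, zero_add, neg_zero] at h1 h2 h3 h4
    rw [Finset.sum_neg_distrib] at h3
    have hprej : pre j = ∑ i, A j i * z (Sum.inr i) + cc j := by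
      simp [hpre, ← hv, Matrix.mulVec, dotProduct]
    show u j = max 0 (pre j)
    rcases hβ (Sum.inr j) with hγ | hγ <;> rw [hγ] at h3 h4
    · -- γ = 0 : u j = 0, pre j ≤ 0
      have hu0 : u j = 0 := by linarith
      have : pre j ≤ 0 := by rw [hprej]; linarith
      rw [hu0, max_eq_left this]
    · -- γ = 1 : u j = pre j ≥ 0
      have hup : u j = pre j := by rw [hprej]; linarith
      have : 0 ≤ pre j := by linarith
      rw [hup, max_eq_right this]

lemma nnHidden_continuous {dims : ℕ → ℕ}
    (W : ∀ i : ℕ, Matrix (Fin (dims (i + 1))) (Fin (dims i)) ℝ)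
    (b : ∀ i : ℕ, Fin (dims (i + 1)) → ℝ) (k : ℕ) :
    Continuous (nnHidden W b k) := by
  induction k with
  | zero => exact continuous_id
  | succ k ih =>
    show Continuous fun x => (fun j => max 0 ((W k).mulVec (nnHidden W b k x) j + b k j))
    refine continuous_pi fun j => Continuous.max continuous_const ?_
    refine Continuous.add ?_ continuous_const
    have hmv : Continuous fun v : Fin (dims k) → ℝ => (W k).mulVec v j := by
      simp only [Matrix.mulVec, dotProduct]
      exact continuous_finset_sum _ fun i _ => continuous_const.mul (continuous_apply i)
    exact hmv.comp ih

lemma linRep_nnHidden {dims : ℕ → ℕ}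
    (W : ∀ i : ℕ, Matrix (Fin (dims (i + 1))) (Fin (dims i)) ℝ)
    (b : ∀ i : ℕ, Fin (dims (i + 1)) → ℝ)
    (X : Set (Fin (dims 0) → ℝ)) (hXc : IsCompact X) (k : ℕ) :
    LinRep X (nnHidden W b k) := by
  induction k with
  | zero => exact linRep_id X
  | succ k ih =>
    have hcont : ContinuousOn (fun x => (W k).mulVec (nnHidden W b k x) + b k) X := by
      refine Continuous.continuousOn ?_
      refine Continuous.add ?_ continuous_const
      refine continuous_pi fun j => ?_
      have hmv : Continuous fun v : Fin (dims k) → ℝ => (W k).mulVec v j := by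
        simp only [Matrix.mulVec, dotProduct]
        exact continuous_finset_sum _ fun i _ => continuous_const.mul (continuous_apply i)
      exact hmv.comp (nnHidden_continuous W b k)
    obtain ⟨C, hC⟩ := hXc.exists_bound_of_continuousOn hcont
    have hM : ∀ x ∈ X, ∀ j, |(W k).mulVec (nnHidden W b k x) j + b k j| ≤ C := by
      intro x hx j
      calc |(W k).mulVec (nnHidden W b k x) j + b k j|
          = ‖((W k).mulVec (nnHidden W b k x) + b k) j‖ := by simp [Real.norm_eq_abs]
        _ ≤ ‖(W k).mulVec (nnHidden W b k x) + b k‖ := norm_le_pi_norm _ j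
        _ ≤ C := hC x hx
    exact ih.relu (W k) (b k) C hM

/-- A fully-connected feed-forward ReLU neural network (with `L` hidden ReLU layers and a
final affine layer, i.e. `ℓ = L + 1 ≥ 1` layers in total) on a compact polyhedron is MILP
representable. -/
theorem relu_network_MILP_representable (L : ℕ) (dims : ℕ → ℕ)
    (W : ∀ i : ℕ, Matrix (Fin (dims (i + 1))) (Fin (dims i)) ℝ)
    (b : ∀ i : ℕ, Fin (dims (i + 1)) → ℝ)
    (X : Set (Fin (dims 0) → ℝ)) (hXc : IsCompact X) (hXp : IsPolyhedron X) :
    MILPRepresentable X (fun x => (W L).mulVec (nnHidden W b L x) + b L) :=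
  ((linRep_nnHidden W b X hXc L).affine (W L) (b L)).milp
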